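/- arXiv:1811.12527 — 3 statements merged into one kernel-verified Lean document; each statement's English description precedes it below -/
import Mathlib

section
/- Suppose there exist u ∈ U and v ∈ V such that no coordinate c satisfies u[c] = v[c] = w[c] = 1. Then in the diameter-construction graph G(U,V,w,a), every walk between u^0 and v^a has length at least 6a+1; in particular the diameter of G(U,V,w,a) is at least 6a+1. -/
/-!
Diameter lower-bound construction (Theorem 3.1, "no" case): if some `u ∈ U` and
`v ∈ V` share no coordinate `c` with `u[c] = v[c] = w[c] = 1`, then in the
diameter-construction graph `G(U,V,w,a)` every walk between `u^0` and `v^a` has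
length at least `6a+1` (so the diameter is at least `6a+1`).
-/

namespace DiamConstr

variable {B P : Type*}

/-- Vertices of a graph assembled from base vertices `B` and, for each path request
`p : P` of length `L p`, the `L p - 1` internal vertices of the path. -/
abbrev Vert (B P : Type*) (L : P → ℕ) : Type _ := B ⊕ (Σ p : P, Fin (L p - 1))

/-- `pos e0 e1 L p i z` : `z` is the `i`-th vertex along the path `p`
(whose endpoints are `e0 p` and `e1 p` and whose length is `L p`). -/
def pos (e0 e1 : P → B) (L : P → ℕ) (p : P) (i : ℕ) (z : Vert B P L) : Prop :=
  (i = 0 ∧ z = Sum.inl (e0 p)) ∨ (i = L p ∧ z = Sum.inl (e1 p)) ∨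
    (∃ h : i - 1 < L p - 1, 0 < i ∧ i < L p ∧ z = Sum.inr ⟨p, ⟨i - 1, h⟩⟩)

/-- The graph obtained from the base vertex set `B` by adding, for each `p : P`, an
internally vertex-disjoint path of length `L p` between the vertices `e0 p` and
`e1 p` (for `L p = 1` this is just an edge). -/
def pathGraph (e0 e1 : P → B) (L : P → ℕ) : SimpleGraph (Vert B P L) where
  Adj x y := x ≠ y ∧ ∃ p i, i < L p ∧
    ((pos e0 e1 L p i x ∧ pos e0 e1 L p (i + 1) y) ∨
     (pos e0 e1 L p i y ∧ pos e0 e1 L p (i + 1) x))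
  symm := by
    refine ⟨?_⟩
    rintro x y ⟨hne, p, i, hi, h⟩
    exact ⟨hne.symm, p, i, hi, h.symm⟩
  loopless := ⟨fun x h => h.1 rfl⟩

/-- Base (named) vertices of the diameter-construction graph `G(U,V,w,a)`:
coordinate vertices `c_U`, `c_V`, path endpoints `u^0`, `u^a`, `v^0`, `v^a`,
and the two extra vertices `x` and `y`. -/
inductive Base (ℓ : ℕ) (U V : Set (Fin ℓ → Bool)) : Type
  | cU (c : Fin ℓ)
  | cV (c : Fin ℓ)
  | u0 (u : U)
  | ua (u : U)
  | v0 (v : V)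
  | va (v : V)
  | x
  | y

/-- Path requests of the diameter-construction graph `G(U,V,w,a)`. -/
inductive Pth (ℓ : ℕ) (U V : Set (Fin ℓ → Bool)) (w : Fin ℓ → Bool) : Type
  | upath (u : U)                                      -- u^0 … u^a, length a
  | vpath (v : V)                                      -- v^0 … v^a, length a
  | uc (u : U) (c : Fin ℓ) (h : u.1 c = true)          -- u^a — c_U, length a
  | vc (v : V) (c : Fin ℓ) (h : v.1 c = true)          -- c_V — v^0, length a
  | wc (c : Fin ℓ) (h : w c = true)                    -- edge c_U — c_V
  | xu (u : U)                                         -- x — u^a, length a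
  | yv (v : V)                                         -- y — v^0, length a

variable {ℓ : ℕ} {U V : Set (Fin ℓ → Bool)} {w : Fin ℓ → Bool}

/-- First endpoint of each path request. -/
def e0 : Pth ℓ U V w → Base ℓ U V
  | .upath u => .u0 u
  | .vpath v => .v0 v
  | .uc u _ _ => .ua u
  | .vc _ c _ => .cV c
  | .wc c _ => .cU c
  | .xu _ => .x
  | .yv _ => .y

/-- Second endpoint of each path request. -/
def e1 : Pth ℓ U V w → Base ℓ U V
  | .upath u => .ua u
  | .vpath v => .va v
  | .uc _ c _ => .cU c
  | .vc v _ _ => .v0 v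
  | .wc c _ => .cV c
  | .xu u => .ua u
  | .yv v => .v0 v

/-- Length of each path request: the `c_U — c_V` connections are single edges,
all other paths have length `a`. -/
def len (a : ℕ) : Pth ℓ U V w → ℕ
  | .wc _ _ => 1
  | _ => a

/-- The diameter-construction graph `G(U,V,w,a)`. -/
def G (a ℓ : ℕ) (U V : Set (Fin ℓ → Bool)) (w : Fin ℓ → Bool) :
    SimpleGraph (Vert (Base ℓ U V) (Pth ℓ U V w) (len a)) :=
  pathGraph e0 e1 (len a)

end DiamConstr


namespace DiamHelper

open DiamConstr

variable {ℓ : ℕ} {U V : Set (Fin ℓ → Bool)} {w : Fin ℓ → Bool}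

/-- Potential on base vertices. -/
def phiB (a : ℕ) (u v : Fin ℓ → Bool) (w : Fin ℓ → Bool) : Base ℓ U V → ℕ
  | .u0 u' => if u'.1 = u then 0 else 4*a
  | .ua u' => if u'.1 = u then a else 3*a
  | .x => 2*a
  | .cU c => if u c = true then 2*a else 4*a
  | .cV c => if u c = true ∧ w c = true then 2*a+1 else 4*a+1
  | .v0 v' => if v'.1 = v then 5*a+1 else 3*a+1
  | .va v' => if v'.1 = v then 6*a+1 else 4*a+1
  | .y => 4*a+1

theorem phiB_lip (a : ℕ) (u v : Fin ℓ → Bool)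
    (hno : ∀ c : Fin ℓ, ¬(u c = true ∧ v c = true ∧ w c = true))
    (p : Pth ℓ U V w) :
    phiB a u v w (e0 p) ≤ phiB a u v w (e1 p) + len a p ∧
    phiB a u v w (e1 p) ≤ phiB a u v w (e0 p) + len a p := by
  cases p with
  | upath u' =>
    simp only [e0, e1, len, phiB]; split <;> omega
  | vpath v' =>
    simp only [e0, e1, len, phiB]; split <;> omega
  | uc u' c h =>
    simp only [e0, e1, len, phiB]
    by_cases h1 : u'.1 = u
    · rw [if_pos h1, if_pos (h1 ▸ h)]; omega
    · rw [if_neg h1]; split <;> omega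
  | vc v' c h =>
    simp only [e0, e1, len, phiB]
    by_cases h1 : u c = true ∧ w c = true
    · have h2 : v'.1 ≠ v := by
        intro h2
        exact hno c ⟨h1.1, h2 ▸ h, h1.2⟩
      rw [if_pos h1, if_neg h2]; omega
    · rw [if_neg h1]; split <;> omega
  | wc c h =>
    simp only [e0, e1, len, phiB]
    by_cases h1 : u c = true
    · rw [if_pos h1, if_pos ⟨h1, h⟩]; omega
    · rw [if_neg h1, if_neg (by tauto)]; omega
  | xu u' =>
    simp only [e0, e1, len, phiB]; split <;> omega
  | yv v' =>
    simp only [e0, e1, len, phiB]; split <;> omega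

/-- Potential along a path at position `i`. -/
def phiF (a : ℕ) (u v : Fin ℓ → Bool) (w : Fin ℓ → Bool) (p : Pth ℓ U V w) (i : ℕ) : ℕ :=
  min (phiB a u v w (e0 p) + i) (phiB a u v w (e1 p) + (len a p - i))

/-- Potential on all vertices. -/
def phi (a : ℕ) (u v : Fin ℓ → Bool) (w : Fin ℓ → Bool) :
    Vert (Base ℓ U V) (Pth ℓ U V w) (len a) → ℕ
  | .inl b => phiB a u v w b
  | .inr ⟨p, j⟩ => phiF a u v w p (j.1 + 1)

theorem phi_pos (a : ℕ) (u v : Fin ℓ → Bool)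
    (hno : ∀ c : Fin ℓ, ¬(u c = true ∧ v c = true ∧ w c = true))
    (p : Pth ℓ U V w) (i : ℕ) (z : Vert (Base ℓ U V) (Pth ℓ U V w) (len a))
    (hp : pos e0 e1 (len a) p i z) :
    phi a u v w z = phiF a u v w p i := by
  obtain ⟨h1, h2⟩ := phiB_lip a u v (w := w) hno p
  rcases hp with ⟨hi, hz⟩ | ⟨hi, hz⟩ | ⟨hlt, hi0, hiL, hz⟩
  · subst hi hz
    simp only [phi, phiF, Nat.sub_zero, Nat.add_zero]
    omega
  · subst hz
    simp only [phi, phiF, hi, Nat.sub_self, Nat.add_zero]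
    omega
  · subst hz
    simp only [phi, phiF]
    congr 1 <;> omega

theorem phi_adj (a : ℕ) (u v : Fin ℓ → Bool)
    (hno : ∀ c : Fin ℓ, ¬(u c = true ∧ v c = true ∧ w c = true))
    {x y : Vert (Base ℓ U V) (Pth ℓ U V w) (len a)}
    (h : (G a ℓ U V w).Adj x y) :
    phi a u v w x ≤ phi a u v w y + 1 ∧ phi a u v w y ≤ phi a u v w x + 1 := by
  obtain ⟨_, p, i, hi, hc⟩ := h
  have key : ∀ x' y' : Vert (Base ℓ U V) (Pth ℓ U V w) (len a),
      pos e0 e1 (len a) p i x' → pos e0 e1 (len a) p (i+1) y' →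
      phi a u v w x' ≤ phi a u v w y' + 1 ∧ phi a u v w y' ≤ phi a u v w x' + 1 := by
    intro x' y' hx hy
    rw [phi_pos a u v hno p i x' hx, phi_pos a u v hno p (i+1) y' hy]
    simp only [phiF]
    omega
  rcases hc with ⟨hx, hy⟩ | ⟨hy, hx⟩
  · exact key x y hx hy
  · exact (key y x hy hx).symm

theorem phi_walk (a : ℕ) (u v : Fin ℓ → Bool)
    (hno : ∀ c : Fin ℓ, ¬(u c = true ∧ v c = true ∧ w c = true))
    {s t : Vert (Base ℓ U V) (Pth ℓ U V w) (len a)}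
    (p : (G a ℓ U V w).Walk s t) :
    phi a u v w t ≤ phi a u v w s + p.length := by
  induction p with
  | nil => simp
  | cons h q ih =>
    have := phi_adj a u v hno h
    simp only [SimpleGraph.Walk.length_cons]
    omega

end DiamHelper

open DiamConstr in
theorem diameter_construction_no_case
    (a ℓ : ℕ) (ha : 0 < a) (hℓ : 0 < ℓ)
    (U V : Set (Fin ℓ → Bool)) (hUfin : U.Finite) (hVfin : V.Finite)
    (hU : U.Nonempty) (hV : V.Nonempty) (w : Fin ℓ → Bool)
    (hUone : ∀ u ∈ U, ∃ c, u c = true) (hVone : ∀ v ∈ V, ∃ c, v c = true)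
    (hUcov : ∀ c : Fin ℓ, ∃ u ∈ U, u c = true)
    (hVcov : ∀ c : Fin ℓ, ∃ v ∈ V, v c = true)
    (u v : Fin ℓ → Bool) (hu : u ∈ U) (hv : v ∈ V)
    (hno : ∀ c : Fin ℓ, ¬(u c = true ∧ v c = true ∧ w c = true)) :
    ∀ p : (G a ℓ U V w).Walk (Sum.inl (Base.u0 ⟨u, hu⟩)) (Sum.inl (Base.va ⟨v, hv⟩)),
      6 * a + 1 ≤ p.length := by
  intro p
  have hw := DiamHelper.phi_walk a u v hno p
  have h1 : DiamHelper.phi a u v w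
      (Sum.inl (Base.u0 ⟨u, hu⟩) : Vert (Base ℓ U V) (Pth ℓ U V w) (len a)) = 0 := by
    simp [DiamHelper.phi, DiamHelper.phiB]
  have h2 : DiamHelper.phi a u v w
      (Sum.inl (Base.va ⟨v, hv⟩) : Vert (Base ℓ U V) (Pth ℓ U V w) (len a)) = 6*a+1 := by
    simp [DiamHelper.phi, DiamHelper.phiB]
  omega
end

section
/- Suppose there exist u ∈ U and v ∈ V such that no coordinate c satisfies u[c] = v[c] = w[c] = 1. Then in the eccentricity-construction graph G_ecc, every walk between u^a and v^a has length at least 5a+1; in particular the eccentricity of u^a is at least 5a+1. -/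
/-!
Eccentricities lower-bound construction (Theorem 3.3, "no" case): if some `u ∈ U`
and `v ∈ V` share no coordinate `c` with `u[c] = v[c] = w[c] = 1`, then in the
eccentricity-construction graph `G_ecc` every walk between `u^a` and `v^a` has
length at least `5a+1` (so the eccentricity of `u^a` is at least `5a+1`).
-/

namespace EccConstr

variable {B P : Type*}

/-- Vertices of a graph assembled from base vertices `B` and, for each path request
`p : P` of length `L p`, the `L p - 1` internal vertices of the path. -/
abbrev Vert (B P : Type*) (L : P → ℕ) : Type _ := B ⊕ (Σ p : P, Fin (L p - 1))

/-- `pos e0 e1 L p i z` : `z` is the `i`-th vertex along the path `p`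
(whose endpoints are `e0 p` and `e1 p` and whose length is `L p`). -/
def pos (e0 e1 : P → B) (L : P → ℕ) (p : P) (i : ℕ) (z : Vert B P L) : Prop :=
  (i = 0 ∧ z = Sum.inl (e0 p)) ∨ (i = L p ∧ z = Sum.inl (e1 p)) ∨
    (∃ h : i - 1 < L p - 1, 0 < i ∧ i < L p ∧ z = Sum.inr ⟨p, ⟨i - 1, h⟩⟩)

/-- The graph obtained from the base vertex set `B` by adding, for each `p : P`, an
internally vertex-disjoint path of length `L p` between the vertices `e0 p` and
`e1 p` (for `L p = 1` this is just an edge). -/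
def pathGraph (e0 e1 : P → B) (L : P → ℕ) : SimpleGraph (Vert B P L) where
  Adj x y := x ≠ y ∧ ∃ p i, i < L p ∧
    ((pos e0 e1 L p i x ∧ pos e0 e1 L p (i + 1) y) ∨
     (pos e0 e1 L p i y ∧ pos e0 e1 L p (i + 1) x))
  symm := ⟨by
    rintro x y ⟨hne, p, i, hi, h⟩
    exact ⟨hne.symm, p, i, hi, h.symm⟩⟩
  loopless := ⟨fun x h => h.1 rfl⟩

/-- Base (named) vertices of the eccentricity-construction graph `G_ecc`. -/
inductive Base (ℓ : ℕ) (U V : Set (Fin ℓ → Bool)) : Type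
  | cU (c : Fin ℓ)
  | cV (c : Fin ℓ)
  | u0 (u : U)
  | ua (u : U)
  | v0 (v : V)
  | va (v : V)
  | x

/-- Path requests of the eccentricity-construction graph `G_ecc`. -/
inductive Pth (ℓ : ℕ) (U V : Set (Fin ℓ → Bool)) (w : Fin ℓ → Bool) : Type
  | upath (u : U)                                      -- u^0 … u^a, length a
  | vpath (v : V)                                      -- v^0 … v^a, length a
  | uc (u : U) (c : Fin ℓ) (h : u.1 c = true)          -- u^a — c_U, length a
  | vc (v : V) (c : Fin ℓ) (h : v.1 c = true)          -- c_V — v^0, length a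
  | wc (c : Fin ℓ) (h : w c = true)                    -- edge c_U — c_V
  | xu (u : U)                                         -- edge x — u^0

variable {ℓ : ℕ} {U V : Set (Fin ℓ → Bool)} {w : Fin ℓ → Bool}

/-- First endpoint of each path request. -/
def e0 : Pth ℓ U V w → Base ℓ U V
  | .upath u => .u0 u
  | .vpath v => .v0 v
  | .uc u _ _ => .ua u
  | .vc _ c _ => .cV c
  | .wc c _ => .cU c
  | .xu _ => .x

/-- Second endpoint of each path request. -/
def e1 : Pth ℓ U V w → Base ℓ U V
  | .upath u => .ua u
  | .vpath v => .va v
  | .uc _ c _ => .cU c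
  | .vc v _ _ => .v0 v
  | .wc c _ => .cV c
  | .xu u => .u0 u

/-- Length of each path request: the `c_U — c_V` connections and the `x — u^0`
connections are single edges, all other paths have length `a`. -/
def len (a : ℕ) : Pth ℓ U V w → ℕ
  | .wc _ _ => 1
  | .xu _ => 1
  | _ => a

/-- The eccentricity-construction graph `G_ecc`. -/
def Gecc (a ℓ : ℕ) (U V : Set (Fin ℓ → Bool)) (w : Fin ℓ → Bool) :
    SimpleGraph (Vert (Base ℓ U V) (Pth ℓ U V w) (len a)) :=
  pathGraph e0 e1 (len a)

end EccConstr

section EccLB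

open EccConstr
open scoped Classical

variable {ℓ : ℕ} {U V : Set (Fin ℓ → Bool)} {w : Fin ℓ → Bool}

/-- Potential on base vertices: a lower bound for distance from `u^a`. -/
noncomputable def fB (a : ℕ) (u : Fin ℓ → Bool) (w : Fin ℓ → Bool) :
    Base ℓ U V → ℕ
  | .ua u' => if u'.1 = u then 0 else 2 * a
  | .u0 u' => if u'.1 = u then a else a + 2
  | .x => a + 1
  | .cU c => if u c = true then a else 3 * a
  | .cV c => if w c = true ∧ u c = true then a + 1 else 3 * a + 1
  | .v0 v' => if ∃ c, v'.1 c = true ∧ w c = true ∧ u c = true then 2 * a + 1 else 4 * a + 1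
  | .va v' => if ∃ c, v'.1 c = true ∧ w c = true ∧ u c = true then 3 * a + 1 else 5 * a + 1

/-- The potential changes by at most `len a p` between the endpoints of path `p`. -/
lemma fB_endpoints (a : ℕ) (ha : 0 < a) (u : Fin ℓ → Bool) (p : Pth ℓ U V w) :
    fB a u w (e0 p) ≤ fB a u w (e1 p) + len a p ∧
      fB a u w (e1 p) ≤ fB a u w (e0 p) + len a p := by
  cases p with
  | upath u' =>
      simp only [e0, e1, len, fB]
      by_cases h : u'.1 = u <;> simp [h] <;> omega
  | vpath v' =>
      simp only [e0, e1, len, fB]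
      by_cases h : ∃ c, v'.1 c = true ∧ w c = true ∧ u c = true <;> simp [h] <;> omega
  | uc u' c hc =>
      simp only [e0, e1, len, fB]
      by_cases h : u'.1 = u
      · have : u c = true := h ▸ hc
        simp [h, this] <;> omega
      · by_cases h2 : u c = true <;> simp [h, h2] <;> omega
  | vc v' c hc =>
      simp only [e0, e1, len, fB]
      by_cases h : w c = true ∧ u c = true
      · have : ∃ c, v'.1 c = true ∧ w c = true ∧ u c = true := ⟨c, hc, h.1, h.2⟩
        simp [h, this] <;> omega
      · by_cases h2 : ∃ c, v'.1 c = true ∧ w c = true ∧ u c = true <;>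
          simp [h, h2] <;> omega
  | wc c hc =>
      simp only [e0, e1, len, fB]
      by_cases h : u c = true <;> simp [h, hc] <;> omega
  | xu u' =>
      simp only [e0, e1, len, fB]
      by_cases h : u'.1 = u <;> simp [h] <;> omega

/-- Potential on all vertices. -/
noncomputable def F (a : ℕ) (u : Fin ℓ → Bool) (w : Fin ℓ → Bool) :
    Vert (Base ℓ U V) (Pth ℓ U V w) (len a) → ℕ
  | .inl b => fB a u w b
  | .inr ⟨p, j⟩ => min (fB a u w (e0 p) + (j.1 + 1)) (fB a u w (e1 p) + (len a p - (j.1 + 1)))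

lemma F_pos (a : ℕ) (ha : 0 < a) (u : Fin ℓ → Bool) {p : Pth ℓ U V w} {i : ℕ}
    {z : Vert (Base ℓ U V) (Pth ℓ U V w) (len a)}
    (hz : pos e0 e1 (len a) p i z) :
    F a u w z = min (fB a u w (e0 p) + i) (fB a u w (e1 p) + (len a p - i)) := by
  obtain ⟨h1, h2⟩ := fB_endpoints (U := U) (V := V) a ha u p
  rcases hz with ⟨hi, hzz⟩ | ⟨hi, hzz⟩ | ⟨hlt, hpos, hiL, hzz⟩
  · subst hi; subst hzz; simp only [F]; omega
  · subst hzz; simp only [F]; omega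
  · subst hzz; simp only [F]
    congr 2 <;> omega

lemma F_step (a : ℕ) (ha : 0 < a) (u : Fin ℓ → Bool)
    {x y : Vert (Base ℓ U V) (Pth ℓ U V w) (len a)}
    (hxy : (Gecc a ℓ U V w).Adj x y) :
    F a u w y ≤ F a u w x + 1 ∧ F a u w x ≤ F a u w y + 1 := by
  obtain ⟨-, p, i, hi, h | h⟩ := hxy <;>
    rw [F_pos a ha u h.1, F_pos a ha u h.2] <;> omega

lemma F_walk (a : ℕ) (ha : 0 < a) (u : Fin ℓ → Bool)
    {x y : Vert (Base ℓ U V) (Pth ℓ U V w) (len a)}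
    (p : (Gecc a ℓ U V w).Walk x y) :
    F a u w y ≤ F a u w x + p.length := by
  induction p with
  | nil => simp
  | cons h q ih =>
      have := F_step a ha u h
      simp only [SimpleGraph.Walk.length_cons]
      omega

end EccLB

open EccConstr in
theorem eccentricity_construction_no_case
    (a ℓ : ℕ) (ha : 0 < a) (hℓ : 0 < ℓ)
    (U V : Set (Fin ℓ → Bool)) (hUfin : U.Finite) (hVfin : V.Finite)
    (hU : U.Nonempty) (hV : V.Nonempty) (w : Fin ℓ → Bool)
    (hUone : ∀ u ∈ U, ∃ c, u c = true) (hVone : ∀ v ∈ V, ∃ c, v c = true)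
    (hUcov : ∀ c : Fin ℓ, ∃ u ∈ U, u c = true)
    (hVcov : ∀ c : Fin ℓ, ∃ v ∈ V, v c = true)
    (u v : Fin ℓ → Bool) (hu : u ∈ U) (hv : v ∈ V)
    (hno : ∀ c : Fin ℓ, ¬(u c = true ∧ v c = true ∧ w c = true)) :
    ∀ p : (Gecc a ℓ U V w).Walk (Sum.inl (Base.ua ⟨u, hu⟩)) (Sum.inl (Base.va ⟨v, hv⟩)),
      5 * a + 1 ≤ p.length := by
  intro p
  have hw := F_walk a ha u p
  have h1 : F a u w (Sum.inl (Base.ua ⟨u, hu⟩) :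
      Vert (Base ℓ U V) (Pth ℓ U V w) (len a)) = 0 := by
    simp [F, fB]
  have h2 : F a u w (Sum.inl (Base.va ⟨v, hv⟩) :
      Vert (Base ℓ U V) (Pth ℓ U V w) (len a)) = 5 * a + 1 := by
    have : ¬ ∃ c, (⟨v, hv⟩ : V).1 c = true ∧ w c = true ∧ u c = true := by
      rintro ⟨c, hc1, hc2, hc3⟩
      exact hno c ⟨hc3, hc1, hc2⟩
    simp [F, fB, this]
  omega
end

section
/- Suppose there exists u ∈ U such that no coordinate c satisfies u[c] = v[c] = 1. Then in the 2-OV graph H(U,v,a), d(s, u_left^0) = 4a and d(u_left^0, u_right^0) = 8a; in particular the eccentricity of s is at least 4a and the diameter of H(U,v,a) is at least 8a. -/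
/-!
2-OV graph `H(U,v,a)` (Theorem 3.4, "no" case): if some `u ∈ U` shares no
coordinate `c` with `u[c] = v[c] = 1`, then `d(s, u_left^0) = 4a` and
`d(u_left^0, u_right^0) = 8a`; in particular the eccentricity of `s` is at least
`4a` and the diameter of `H(U,v,a)` is at least `8a`.
-/

namespace OVConstr

variable {B P : Type*}

/-- Vertices of a graph assembled from base vertices `B` and, for each path request
`p : P` of length `L p`, the `L p - 1` internal vertices of the path. -/
abbrev Vert (B P : Type*) (L : P → ℕ) : Type _ := B ⊕ (Σ p : P, Fin (L p - 1))

/-- `pos e0 e1 L p i z` : `z` is the `i`-th vertex along the path `p`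
(whose endpoints are `e0 p` and `e1 p` and whose length is `L p`). -/
def pos (e0 e1 : P → B) (L : P → ℕ) (p : P) (i : ℕ) (z : Vert B P L) : Prop :=
  (i = 0 ∧ z = Sum.inl (e0 p)) ∨ (i = L p ∧ z = Sum.inl (e1 p)) ∨
    (∃ h : i - 1 < L p - 1, 0 < i ∧ i < L p ∧ z = Sum.inr ⟨p, ⟨i - 1, h⟩⟩)

/-- The graph obtained from the base vertex set `B` by adding, for each `p : P`, an
internally vertex-disjoint path of length `L p` between the vertices `e0 p` and
`e1 p` (for `L p = 1` this is just an edge). -/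
def pathGraph (e0 e1 : P → B) (L : P → ℕ) : SimpleGraph (Vert B P L) where
  Adj x y := x ≠ y ∧ ∃ p i, i < L p ∧
    ((pos e0 e1 L p i x ∧ pos e0 e1 L p (i + 1) y) ∨
     (pos e0 e1 L p i y ∧ pos e0 e1 L p (i + 1) x))
  symm := ⟨by
    rintro x y ⟨hne, p, i, hi, h⟩
    exact ⟨hne.symm, p, i, hi, h.symm⟩⟩
  loopless := ⟨fun x h => h.1 rfl⟩

/-- Base (named) vertices of the 2-OV graph `H(U,v,a)`. -/
inductive Base (ℓ : ℕ) (U : Set (Fin ℓ → Bool)) : Type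
  | s
  | cL (c : Fin ℓ)
  | cR (c : Fin ℓ)
  | uL0 (u : U)
  | uLa (u : U)
  | uR0 (u : U)
  | uRa (u : U)

/-- Path requests of the 2-OV graph `H(U,v,a)`. -/
inductive Pth (ℓ : ℕ) (U : Set (Fin ℓ → Bool)) (v : Fin ℓ → Bool) : Type
  | scL (c : Fin ℓ)                                    -- s — c_left, length 2a
  | scR (c : Fin ℓ)                                    -- s — c_right, length 2a
  | uLpath (u : U)                                     -- u_left^0 … u_left^a, length a
  | uRpath (u : U)                                     -- u_right^0 … u_right^a, length a
  | ucL (u : U) (c : Fin ℓ) (h : u.1 c = true)         -- u_left^a — c_left, length a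
  | ucR (u : U) (c : Fin ℓ) (h : u.1 c = true)         -- u_right^a — c_right, length a
  | vcL (c : Fin ℓ) (h : v c = true)                   -- edge s — c_left
  | vcR (c : Fin ℓ) (h : v c = true)                   -- edge s — c_right

variable {ℓ : ℕ} {U : Set (Fin ℓ → Bool)} {v : Fin ℓ → Bool}

/-- First endpoint of each path request. -/
def e0 : Pth ℓ U v → Base ℓ U
  | .scL _ => .s
  | .scR _ => .s
  | .uLpath u => .uL0 u
  | .uRpath u => .uR0 u
  | .ucL u _ _ => .uLa u
  | .ucR u _ _ => .uRa u
  | .vcL _ _ => .s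
  | .vcR _ _ => .s

/-- Second endpoint of each path request. -/
def e1 : Pth ℓ U v → Base ℓ U
  | .scL c => .cL c
  | .scR c => .cR c
  | .uLpath u => .uLa u
  | .uRpath u => .uRa u
  | .ucL _ c _ => .cL c
  | .ucR _ c _ => .cR c
  | .vcL c _ => .cL c
  | .vcR c _ => .cR c

/-- Length of each path request: the `s — c_left`/`s — c_right` paths have length
`2a`, the `v`-edges have length `1`, all other paths have length `a`. -/
def len (a : ℕ) : Pth ℓ U v → ℕ
  | .scL _ => 2 * a
  | .scR _ => 2 * a
  | .vcL _ _ => 1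
  | .vcR _ _ => 1
  | _ => a

/-- The 2-OV graph `H(U,v,a)`. -/
def H (a ℓ : ℕ) (U : Set (Fin ℓ → Bool)) (v : Fin ℓ → Bool) :
    SimpleGraph (Vert (Base ℓ U) (Pth ℓ U v) (len a)) :=
  pathGraph e0 e1 (len a)

/-- The eccentricity (in `ℕ∞`) of a vertex `z`: the supremum of the distances from
`z` to all vertices. -/
noncomputable def ecc (a ℓ : ℕ) (U : Set (Fin ℓ → Bool)) (v : Fin ℓ → Bool)
    (z : Vert (Base ℓ U) (Pth ℓ U v) (len a)) : ℕ∞ :=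
  ⨆ y, (H a ℓ U v).edist z y

end OVConstr

namespace OVConstr

variable {a ℓ : ℕ} {U : Set (Fin ℓ → Bool)} {v : Fin ℓ → Bool}

/-- Intended distance from `s` to `c_left`/`c_right`. -/
def dLv (a : ℕ) (v : Fin ℓ → Bool) (c : Fin ℓ) : ℕ := if v c then 1 else 2 * a

/-- Intended distance from `s` to `u'_left^a` (and `u'_right^a`). -/
def mv (a : ℕ) (v : Fin ℓ → Bool) (u' : U) : ℕ :=
  if ∃ c, u'.1 c = true ∧ v c = true then a + 1 else 3 * a

lemma dLv_bounds (ha : 0 < a) (c : Fin ℓ) : 1 ≤ dLv a v c ∧ dLv a v c ≤ 2 * a := by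
  unfold dLv; split <;> omega

lemma mv_bounds (ha : 0 < a) (u' : U) : a + 1 ≤ mv a v u' ∧ mv a v u' ≤ 3 * a := by
  unfold mv; split <;> omega

lemma mv_dLv (ha : 0 < a) (u' : U) (c : Fin ℓ) (h : u'.1 c = true) :
    mv a v u' ≤ dLv a v c + a ∧ dLv a v c ≤ mv a v u' + a := by
  by_cases hm : ∃ c, u'.1 c = true ∧ v c = true
  · have h1 : mv a v u' = a + 1 := if_pos hm
    have h2 := dLv_bounds (v := v) ha c
    omega
  · have h1 : mv a v u' = 3 * a := if_neg hm
    have hv : v c = false := by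
      cases hvc : v c
      · rfl
      · exact absurd ⟨c, h, hvc⟩ hm
    have h2 : dLv a v c = 2 * a := by simp [dLv, hv]
    omega

/-- The potential function along each path. -/
def fP (a : ℕ) (v : Fin ℓ → Bool) : Pth ℓ U v → ℕ → ℕ
  | .scL c, i => min i (dLv a v c + (2 * a - i))
  | .scR c, i => min i (dLv a v c + (2 * a - i))
  | .uLpath u', i => mv a v u' + (a - i)
  | .uRpath u', i => mv a v u' + (a - i)
  | .ucL u' c _, i => min (mv a v u' + i) (dLv a v c + (a - i))
  | .ucR u' c _, i => min (mv a v u' + i) (dLv a v c + (a - i))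
  | .vcL _ _, i => min i 1
  | .vcR _ _, i => min i 1

/-- The potential function on base vertices: intended distance from `s`. -/
def phiB (a : ℕ) (v : Fin ℓ → Bool) : Base ℓ U → ℕ
  | .s => 0
  | .cL c => dLv a v c
  | .cR c => dLv a v c
  | .uL0 u' => mv a v u' + a
  | .uLa u' => mv a v u'
  | .uR0 u' => mv a v u' + a
  | .uRa u' => mv a v u'

/-- The potential function on all vertices. -/
def phi (a : ℕ) (v : Fin ℓ → Bool) : Vert (Base ℓ U) (Pth ℓ U v) (len a) → ℕ
  | .inl b => phiB a v b
  | .inr ⟨p, k⟩ => fP a v p (k.1 + 1)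

lemma fP_zero (ha : 0 < a) (p : Pth ℓ U v) : fP a v p 0 = phiB a v (e0 p) := by
  cases p with
  | ucL u' c h =>
    have := mv_dLv (v := v) ha u' c h
    simp only [fP, phiB, e0]; omega
  | ucR u' c h =>
    have := mv_dLv (v := v) ha u' c h
    simp only [fP, phiB, e0]; omega
  | _ => simp [fP, phiB, e0]

lemma fP_last (ha : 0 < a) (p : Pth ℓ U v) : fP a v p (len a p) = phiB a v (e1 p) := by
  cases p with
  | scL c => have := dLv_bounds (v := v) ha c; simp only [fP, phiB, e1, len]; omega
  | scR c => have := dLv_bounds (v := v) ha c; simp only [fP, phiB, e1, len]; omega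
  | uLpath u' => simp only [fP, phiB, e1, len]; omega
  | uRpath u' => simp only [fP, phiB, e1, len]; omega
  | ucL u' c h =>
    have := mv_dLv (v := v) ha u' c h
    simp only [fP, phiB, e1, len]; omega
  | ucR u' c h =>
    have := mv_dLv (v := v) ha u' c h
    simp only [fP, phiB, e1, len]; omega
  | vcL c h => simp [fP, phiB, e1, len, dLv, h]
  | vcR c h => simp [fP, phiB, e1, len, dLv, h]

lemma fP_step (p : Pth ℓ U v) (i : ℕ) (hi : i < len a p) :
    fP a v p i ≤ fP a v p (i + 1) + 1 ∧ fP a v p (i + 1) ≤ fP a v p i + 1 := by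
  cases p <;> simp only [fP, len] at hi ⊢ <;> omega

lemma phi_pos (ha : 0 < a) {p : Pth ℓ U v} {i : ℕ}
    {z : Vert (Base ℓ U) (Pth ℓ U v) (len a)}
    (h : pos e0 e1 (len a) p i z) : phi a v z = fP a v p i := by
  rcases h with ⟨rfl, rfl⟩ | ⟨rfl, rfl⟩ | ⟨hlt, hi0, hil, rfl⟩
  · exact (fP_zero ha p).symm
  · exact (fP_last ha p).symm
  · show fP a v p (i - 1 + 1) = fP a v p i
    congr 1; omega

lemma phi_adj (ha : 0 < a) {x y : Vert (Base ℓ U) (Pth ℓ U v) (len a)}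
    (h : (H a ℓ U v).Adj x y) :
    phi a v x ≤ phi a v y + 1 ∧ phi a v y ≤ phi a v x + 1 := by
  obtain ⟨-, p, i, hi, hc⟩ := h
  rcases hc with ⟨hx, hy⟩ | ⟨hy, hx⟩
  · rw [phi_pos ha hx, phi_pos ha hy]
    exact fP_step p i hi
  · rw [phi_pos ha hx, phi_pos ha hy]
    have := fP_step (v := v) p i hi
    omega

lemma phi_walk (ha : 0 < a) {x y : Vert (Base ℓ U) (Pth ℓ U v) (len a)}
    (w : (H a ℓ U v).Walk x y) :
    phi a v x ≤ phi a v y + w.length ∧ phi a v y ≤ phi a v x + w.length := by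
  induction w with
  | nil => simp
  | cons h w ih =>
    have h2 := phi_adj ha h
    simp only [SimpleGraph.Walk.length_cons]
    omega

lemma edist_ge (ha : 0 < a) (x y : Vert (Base ℓ U) (Pth ℓ U v) (len a)) :
    ((phi a v y - phi a v x : ℕ) : ℕ∞) ≤ (H a ℓ U v).edist x y := by
  by_cases hr : (H a ℓ U v).Reachable x y
  · obtain ⟨w, hw⟩ := hr.exists_walk_length_eq_edist
    rw [← hw]
    have h2 := phi_walk ha w
    exact Nat.cast_le.mpr (by omega)
  · simp [SimpleGraph.edist_eq_top_of_not_reachable hr]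

lemma len_pos (ha : 0 < a) (p : Pth ℓ U v) : 0 < len a p := by
  cases p <;> simp [len] <;> omega

lemma pos_zero (p : Pth ℓ U v) :
    pos e0 e1 (len a) p 0 (Sum.inl (e0 p)) := Or.inl ⟨rfl, rfl⟩

lemma pos_last (p : Pth ℓ U v) :
    pos e0 e1 (len a) p (len a p) (Sum.inl (e1 p)) := Or.inr (Or.inl ⟨rfl, rfl⟩)

lemma pos_mid (p : Pth ℓ U v) {i : ℕ} (h0 : 0 < i) (h1 : i < len a p) :
    pos e0 e1 (len a) p i (Sum.inr ⟨p, ⟨i - 1, by omega⟩⟩) :=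
  Or.inr (Or.inr ⟨by omega, h0, h1, rfl⟩)

/-- The vertex at position `i` along path `p`. -/
def vtx (a : ℕ) (v : Fin ℓ → Bool) (p : Pth ℓ U v) (i : ℕ) :
    Vert (Base ℓ U) (Pth ℓ U v) (len a) :=
  if h : 0 < i ∧ i < len a p then Sum.inr ⟨p, ⟨i - 1, by omega⟩⟩
  else if i = 0 then Sum.inl (e0 p) else Sum.inl (e1 p)

lemma pos_vtx (ha : 0 < a) (p : Pth ℓ U v) {i : ℕ} (hi : i ≤ len a p) :
    pos e0 e1 (len a) p i (vtx a v p i) := by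
  have hl := len_pos (v := v) ha p
  unfold vtx
  split
  · next h => exact pos_mid p h.1 h.2
  · next h =>
    split
    · next h0 => subst h0; exact pos_zero p
    · next h0 =>
      have : i = len a p := by omega
      subst this; exact pos_last p

lemma e0_ne_e1 (p : Pth ℓ U v) : e0 p ≠ e1 p := by
  cases p <;> simp [e0, e1]

lemma vtx_ne (ha : 0 < a) (p : Pth ℓ U v) {i : ℕ} (hi : i < len a p) :
    vtx a v p i ≠ vtx a v p (i + 1) := by
  have hl := len_pos (v := v) ha p
  unfold vtx
  by_cases h1 : 0 < i ∧ i < len a p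
  · rw [dif_pos h1]
    by_cases h2 : 0 < i + 1 ∧ i + 1 < len a p
    · rw [dif_pos h2]
      intro heq
      have h3 := Sum.inr_injective heq
      have h4 : i - 1 = i := by
        have := congrArg (fun q : (Σ p : Pth ℓ U v, Fin (len a p - 1)) => q.2.1) h3
        simpa using this
      omega
    · rw [dif_neg h2, if_neg (by omega)]
      simp
  · rw [dif_neg h1, if_pos (by omega)]
    by_cases h2 : 0 < i + 1 ∧ i + 1 < len a p
    · rw [dif_pos h2]; simp
    · rw [dif_neg h2, if_neg (by omega)]
      simpa using e0_ne_e1 p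

lemma adj_vtx (ha : 0 < a) (p : Pth ℓ U v) {i : ℕ} (hi : i < len a p) :
    (H a ℓ U v).Adj (vtx a v p i) (vtx a v p (i + 1)) :=
  ⟨vtx_ne ha p hi, p, i, hi,
    Or.inl ⟨pos_vtx ha p (by omega), pos_vtx ha p (by omega)⟩⟩

lemma walk_exists (ha : 0 < a) (p : Pth ℓ U v) :
    ∀ i, i ≤ len a p →
      ∃ w : (H a ℓ U v).Walk (vtx a v p 0) (vtx a v p i), w.length = i := by
  intro i
  induction i with
  | zero => exact fun _ => ⟨SimpleGraph.Walk.nil, rfl⟩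
  | succ n ih =>
    intro h
    obtain ⟨w, hw⟩ := ih (by omega)
    exact ⟨w.concat (adj_vtx ha p (by omega)), by simp [hw]⟩

lemma vtx_zero (ha : 0 < a) (p : Pth ℓ U v) : vtx a v p 0 = Sum.inl (e0 p) := by
  unfold vtx
  rw [dif_neg (by omega), if_pos rfl]

lemma vtx_last (ha : 0 < a) (p : Pth ℓ U v) :
    vtx a v p (len a p) = Sum.inl (e1 p) := by
  have hl := len_pos (v := v) ha p
  unfold vtx
  rw [dif_neg (by omega), if_neg (by omega)]

lemma edist_path (ha : 0 < a) (p : Pth ℓ U v) :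
    (H a ℓ U v).edist (Sum.inl (e0 p)) (Sum.inl (e1 p)) ≤ ((len a p : ℕ) : ℕ∞) := by
  obtain ⟨w, hw⟩ := walk_exists ha p (len a p) le_rfl
  rw [← vtx_zero ha p, ← vtx_last ha p]
  calc (H a ℓ U v).edist (vtx a v p 0) (vtx a v p (len a p)) ≤ (w.length : ℕ∞) :=
        SimpleGraph.edist_le w
    _ = ((len a p : ℕ) : ℕ∞) := by rw [hw]

/-- Whether a path lies on the right side. -/
def sideOf : Pth ℓ U v → Bool
  | .scR _ => true
  | .uRpath _ => true
  | .ucR _ _ _ => true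
  | .vcR _ _ => true
  | _ => false

/-- Whether a vertex lies on the right side. -/
def isR : Vert (Base ℓ U) (Pth ℓ U v) (len a) → Bool
  | .inl (.cR _) => true
  | .inl (.uR0 _) => true
  | .inl (.uRa _) => true
  | .inl _ => false
  | .inr ⟨p, _⟩ => sideOf p

lemma isR_pos {p : Pth ℓ U v} {i : ℕ} {z : Vert (Base ℓ U) (Pth ℓ U v) (len a)}
    (h : pos e0 e1 (len a) p i z) :
    z = Sum.inl Base.s ∨ isR z = sideOf p := by
  rcases h with ⟨-, rfl⟩ | ⟨-, rfl⟩ | ⟨-, -, -, rfl⟩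
  · cases p <;> simp [e0, isR, sideOf]
  · cases p <;> simp [e1, isR, sideOf]
  · right; rfl

lemma adj_side {x y : Vert (Base ℓ U) (Pth ℓ U v) (len a)}
    (h : (H a ℓ U v).Adj x y) :
    x = Sum.inl Base.s ∨ y = Sum.inl Base.s ∨ isR x = isR y := by
  obtain ⟨-, p, i, hi, hc⟩ := h
  have hxy : (∃ j, pos e0 e1 (len a) p j x) ∧ ∃ j, pos e0 e1 (len a) p j y := by
    rcases hc with ⟨hx, hy⟩ | ⟨hy, hx⟩
    · exact ⟨⟨i, hx⟩, ⟨i + 1, hy⟩⟩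
    · exact ⟨⟨i + 1, hx⟩, ⟨i, hy⟩⟩
  obtain ⟨⟨jx, hx⟩, ⟨jy, hy⟩⟩ := hxy
  rcases isR_pos hx with h1 | h1
  · exact Or.inl h1
  · rcases isR_pos hy with h2 | h2
    · exact Or.inr (Or.inl h2)
    · exact Or.inr (Or.inr (h1.trans h2.symm))

lemma s_mem_walk {x y : Vert (Base ℓ U) (Pth ℓ U v) (len a)}
    (w : (H a ℓ U v).Walk x y) (hx : isR x = false) (hy : isR y = true) :
    Sum.inl Base.s ∈ w.support := by
  induction w with
  | nil => rw [hx] at hy; simp at hy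
  | @cons x' z y' h w ih =>
    rw [SimpleGraph.Walk.support_cons, List.mem_cons]
    rcases adj_side h with h1 | h1 | h1
    · exact Or.inl h1.symm
    · exact Or.inr (h1 ▸ w.start_mem_support)
    · exact Or.inr (ih (h1.symm.trans hx) hy)

end OVConstr


open OVConstr in
theorem two_ov_graph_no_case
    (a ℓ : ℕ) (ha : 0 < a) (hℓ : 0 < ℓ)
    (U : Set (Fin ℓ → Bool)) (hUfin : U.Finite) (hU : U.Nonempty)
    (hUone : ∀ u ∈ U, ∃ c, u c = true) (v : Fin ℓ → Bool)
    (u : Fin ℓ → Bool) (hu : u ∈ U)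
    (hno : ∀ c : Fin ℓ, ¬(u c = true ∧ v c = true)) :
    (H a ℓ U v).edist (Sum.inl Base.s) (Sum.inl (Base.uL0 ⟨u, hu⟩)) = ((4 * a : ℕ) : ℕ∞) ∧
      (H a ℓ U v).edist (Sum.inl (Base.uL0 ⟨u, hu⟩)) (Sum.inl (Base.uR0 ⟨u, hu⟩))
        = ((8 * a : ℕ) : ℕ∞) ∧
      ((4 * a : ℕ) : ℕ∞) ≤ ecc a ℓ U v (Sum.inl Base.s) ∧
      ((8 * a : ℕ) : ℕ∞) ≤ (H a ℓ U v).ediam := by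
  classical
  obtain ⟨c₀, hc⟩ := hUone u hu
  set uu : U := ⟨u, hu⟩ with huu
  have hmv : mv a v uu = 3 * a := if_neg (by rintro ⟨c, h1, h2⟩; exact hno c ⟨h1, h2⟩)
  have hphiS : phi a v (Sum.inl Base.s : Vert (Base ℓ U) (Pth ℓ U v) (len a)) = 0 := rfl
  have hphiL : phi a v (Sum.inl (Base.uL0 uu) : Vert (Base ℓ U) (Pth ℓ U v) (len a))
      = 4 * a := by
    show mv a v uu + a = 4 * a
    omega
  have hphiR : phi a v (Sum.inl (Base.uR0 uu) : Vert (Base ℓ U) (Pth ℓ U v) (len a))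
      = 4 * a := by
    show mv a v uu + a = 4 * a
    omega
  -- upper bound pieces (left)
  have hscL : (H a ℓ U v).edist (Sum.inl Base.s) (Sum.inl (Base.cL c₀))
      ≤ ((2 * a : ℕ) : ℕ∞) := edist_path ha (.scL c₀)
  have hucL : (H a ℓ U v).edist (Sum.inl (Base.uLa uu)) (Sum.inl (Base.cL c₀))
      ≤ ((a : ℕ) : ℕ∞) := edist_path ha (.ucL uu c₀ hc)
  have hupL : (H a ℓ U v).edist (Sum.inl (Base.uL0 uu)) (Sum.inl (Base.uLa uu))
      ≤ ((a : ℕ) : ℕ∞) := edist_path ha (.uLpath uu)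
  have hub1 : (H a ℓ U v).edist (Sum.inl Base.s) (Sum.inl (Base.uL0 uu))
      ≤ ((4 * a : ℕ) : ℕ∞) := by
    calc (H a ℓ U v).edist (Sum.inl Base.s) (Sum.inl (Base.uL0 uu))
        ≤ (H a ℓ U v).edist (Sum.inl Base.s) (Sum.inl (Base.cL c₀)) +
          (H a ℓ U v).edist (Sum.inl (Base.cL c₀)) (Sum.inl (Base.uL0 uu)) :=
          SimpleGraph.edist_triangle
      _ ≤ (H a ℓ U v).edist (Sum.inl Base.s) (Sum.inl (Base.cL c₀)) +
          ((H a ℓ U v).edist (Sum.inl (Base.cL c₀)) (Sum.inl (Base.uLa uu)) +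
           (H a ℓ U v).edist (Sum.inl (Base.uLa uu)) (Sum.inl (Base.uL0 uu))) :=
          add_le_add (le_refl _) SimpleGraph.edist_triangle
      _ ≤ ((2 * a : ℕ) : ℕ∞) + (((a : ℕ) : ℕ∞) + ((a : ℕ) : ℕ∞)) := by
          refine add_le_add hscL (add_le_add ?_ ?_)
          · rw [SimpleGraph.edist_comm]; exact hucL
          · rw [SimpleGraph.edist_comm]; exact hupL
      _ = ((4 * a : ℕ) : ℕ∞) := by push_cast; ring
  -- upper bound pieces (right)
  have hscR : (H a ℓ U v).edist (Sum.inl Base.s) (Sum.inl (Base.cR c₀))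
      ≤ ((2 * a : ℕ) : ℕ∞) := edist_path ha (.scR c₀)
  have hucR : (H a ℓ U v).edist (Sum.inl (Base.uRa uu)) (Sum.inl (Base.cR c₀))
      ≤ ((a : ℕ) : ℕ∞) := edist_path ha (.ucR uu c₀ hc)
  have hupR : (H a ℓ U v).edist (Sum.inl (Base.uR0 uu)) (Sum.inl (Base.uRa uu))
      ≤ ((a : ℕ) : ℕ∞) := edist_path ha (.uRpath uu)
  have hub2 : (H a ℓ U v).edist (Sum.inl Base.s) (Sum.inl (Base.uR0 uu))
      ≤ ((4 * a : ℕ) : ℕ∞) := by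
    calc (H a ℓ U v).edist (Sum.inl Base.s) (Sum.inl (Base.uR0 uu))
        ≤ (H a ℓ U v).edist (Sum.inl Base.s) (Sum.inl (Base.cR c₀)) +
          (H a ℓ U v).edist (Sum.inl (Base.cR c₀)) (Sum.inl (Base.uR0 uu)) :=
          SimpleGraph.edist_triangle
      _ ≤ (H a ℓ U v).edist (Sum.inl Base.s) (Sum.inl (Base.cR c₀)) +
          ((H a ℓ U v).edist (Sum.inl (Base.cR c₀)) (Sum.inl (Base.uRa uu)) +
           (H a ℓ U v).edist (Sum.inl (Base.uRa uu)) (Sum.inl (Base.uR0 uu))) :=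
          add_le_add (le_refl _) SimpleGraph.edist_triangle
      _ ≤ ((2 * a : ℕ) : ℕ∞) + (((a : ℕ) : ℕ∞) + ((a : ℕ) : ℕ∞)) := by
          refine add_le_add hscR (add_le_add ?_ ?_)
          · rw [SimpleGraph.edist_comm]; exact hucR
          · rw [SimpleGraph.edist_comm]; exact hupR
      _ = ((4 * a : ℕ) : ℕ∞) := by push_cast; ring
  -- lower bounds from the potential function
  have hlb1 : ((4 * a : ℕ) : ℕ∞) ≤
      (H a ℓ U v).edist (Sum.inl Base.s) (Sum.inl (Base.uL0 uu)) := by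
    have h := edist_ge (v := v) ha (Sum.inl Base.s) (Sum.inl (Base.uL0 uu))
    rwa [hphiL, hphiS, Nat.sub_zero] at h
  have hlb2 : ((4 * a : ℕ) : ℕ∞) ≤
      (H a ℓ U v).edist (Sum.inl Base.s) (Sum.inl (Base.uR0 uu)) := by
    have h := edist_ge (v := v) ha (Sum.inl Base.s) (Sum.inl (Base.uR0 uu))
    rwa [hphiR, hphiS, Nat.sub_zero] at h
  have heq1 : (H a ℓ U v).edist (Sum.inl Base.s) (Sum.inl (Base.uL0 uu))
      = ((4 * a : ℕ) : ℕ∞) := le_antisymm hub1 hlb1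
  -- distance uL0 — uR0
  have hub8 : (H a ℓ U v).edist (Sum.inl (Base.uL0 uu)) (Sum.inl (Base.uR0 uu))
      ≤ ((8 * a : ℕ) : ℕ∞) := by
    calc (H a ℓ U v).edist (Sum.inl (Base.uL0 uu)) (Sum.inl (Base.uR0 uu))
        ≤ (H a ℓ U v).edist (Sum.inl (Base.uL0 uu)) (Sum.inl Base.s) +
          (H a ℓ U v).edist (Sum.inl Base.s) (Sum.inl (Base.uR0 uu)) :=
          SimpleGraph.edist_triangle
      _ ≤ ((4 * a : ℕ) : ℕ∞) + ((4 * a : ℕ) : ℕ∞) := by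
          refine add_le_add ?_ hub2
          rw [SimpleGraph.edist_comm]; exact hub1
      _ = ((8 * a : ℕ) : ℕ∞) := by push_cast; ring
  have hne : (H a ℓ U v).edist (Sum.inl (Base.uL0 uu)) (Sum.inl (Base.uR0 uu)) ≠ ⊤ :=
    ne_top_of_le_ne_top (ENat.coe_ne_top _) hub8
  obtain ⟨w, hw⟩ := SimpleGraph.exists_walk_of_edist_ne_top hne
  have hsupp : (Sum.inl Base.s : Vert (Base ℓ U) (Pth ℓ U v) (len a)) ∈ w.support :=
    s_mem_walk w rfl rfl
  have hspec := w.take_spec hsupp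
  have hlen : (w.takeUntil _ hsupp).length + (w.dropUntil _ hsupp).length = w.length := by
    rw [← SimpleGraph.Walk.length_append, hspec]
  have hA : ((4 * a : ℕ) : ℕ∞) ≤ ((w.takeUntil _ hsupp).length : ℕ∞) := by
    refine le_trans ?_ (SimpleGraph.edist_le _)
    rw [SimpleGraph.edist_comm]
    exact hlb1
  have hB : ((4 * a : ℕ) : ℕ∞) ≤ ((w.dropUntil _ hsupp).length : ℕ∞) :=
    le_trans hlb2 (SimpleGraph.edist_le _)
  have hlb8 : ((8 * a : ℕ) : ℕ∞) ≤
      (H a ℓ U v).edist (Sum.inl (Base.uL0 uu)) (Sum.inl (Base.uR0 uu)) := by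
    rw [← hw]
    calc ((8 * a : ℕ) : ℕ∞) = ((4 * a : ℕ) : ℕ∞) + ((4 * a : ℕ) : ℕ∞) := by
          push_cast; ring
      _ ≤ ((w.takeUntil _ hsupp).length : ℕ∞) + ((w.dropUntil _ hsupp).length : ℕ∞) :=
          add_le_add hA hB
      _ = (w.length : ℕ∞) := by rw [← Nat.cast_add, hlen]
  have heq2 : (H a ℓ U v).edist (Sum.inl (Base.uL0 uu)) (Sum.inl (Base.uR0 uu))
      = ((8 * a : ℕ) : ℕ∞) := le_antisymm hub8 hlb8
  refine ⟨heq1, heq2, ?_, ?_⟩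
  · rw [← heq1]
    exact le_iSup (fun y => (H a ℓ U v).edist (Sum.inl Base.s) y) (Sum.inl (Base.uL0 uu))
  · rw [← heq2]
    exact SimpleGraph.edist_le_ediam
end
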